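/- Let Ā = ⟨A_α : α < ω₁⟩ be a sequence of pairwise disjoint subsets of ω₁, let S ⊆ ω₁, and let γ ≥ ω₁ be an ordinal such that S is certified at γ modulo Ā. Then ω₁ ≤ γ < ω₂, and for every canonical function g for γ and every α ∈ ω₁ \ S, the set {β < ω₁ : g(β) ∈ A_α} is nonstationary. -/

import Mathlib

noncomputable section

/-- The first uncountable ordinal. -/
def omega1 : Ordinal.{0} := (Cardinal.aleph 1).ord

/-- The second uncountable cardinal, as an ordinal. -/
def omega2 : Ordinal.{0} := (Cardinal.aleph 2).ord

open Classical in
/-- The order type of a set of ordinals (the unique ordinal whose lift is the order type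
of the set with its induced well-order; every bounded set of ordinals has one). -/
def otp (s : Set Ordinal.{0}) : Ordinal.{0} :=
  if h : ∃ o : Ordinal.{0}, Ordinal.lift.{1} o = Ordinal.type ((· < ·) : s → s → Prop)
  then h.choose else 0

/-- `C` is a club subset of `ω₁`: a subset of `ω₁` that is unbounded in `ω₁` and
closed, i.e. contains the supremum of each of its nonempty subsets that is bounded
below `ω₁`. -/
def IsClub1 (C : Set Ordinal.{0}) : Prop :=
  C ⊆ Set.Iio omega1 ∧
  (∀ α < omega1, ∃ β ∈ C, α < β) ∧
  (∀ s : Set Ordinal.{0}, s ⊆ C → s.Nonempty → sSup s < omega1 → sSup s ∈ C)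

/-- `S` is a stationary subset of `ω₁`: it meets every club subset of `ω₁`. -/
def IsStationary1 (S : Set Ordinal.{0}) : Prop := ∀ C, IsClub1 C → (S ∩ C).Nonempty

/-- `S` is certified at `γ` modulo the sequence `A = ⟨A α : α < ω₁⟩`. -/
def Certified (A : Ordinal.{0} → Set Ordinal.{0}) (S : Set Ordinal.{0}) (γ : Ordinal.{0}) :
    Prop :=
  ∃ a : Ordinal.{0} → Set Ordinal.{0},
    (∀ α < omega1, a α ⊆ Set.Iio γ ∧ (a α).Countable ∧ otp (a α) ∈ ⋃ ξ ∈ S, A ξ) ∧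
    (∀ α β : Ordinal.{0}, α < β → β < omega1 → a α ⊂ a β) ∧
    (∀ β, β < omega1 → Order.IsSuccLimit β → a β = ⋃ (α) (_ : α < β), a α) ∧
    Set.Iio γ = ⋃ (α) (_ : α < omega1), a α

/-- `f` is a canonical function for `γ`: for some bijection `π : ω₁ → γ`,
`f α = otp (π[α])` for all `α < ω₁`. -/
def IsCanonical (γ : Ordinal.{0}) (f : Ordinal.{0} → Ordinal.{0}) : Prop :=
  ∃ π : Ordinal.{0} → Ordinal.{0}, Set.BijOn π (Set.Iio omega1) (Set.Iio γ) ∧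
    ∀ α < omega1, f α = otp (π '' Set.Iio α)

/- ### Auxiliary lemmas -/

lemma omega1_isLimit : Order.IsSuccLimit omega1 := Cardinal.isSuccLimit_ord (Cardinal.aleph0_le_aleph 1)

lemma cof_omega1 : omega1.cof = Cardinal.aleph 1 :=
  Cardinal.isRegular_aleph_one.cof_eq

lemma sup_lt_omega1 {f : ℕ → Ordinal.{0}} (h : ∀ i, f i < omega1) :
    (⨆ i, f i) < omega1 := by
  apply Ordinal.iSup_lt_ord _ h
  rw [cof_omega1, Cardinal.mk_denumerable]
  exact Cardinal.aleph0_lt_aleph_one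

lemma exists_bound_lt_omega1 {t : Set Ordinal.{0}} (ht : t.Countable)
    (h : ∀ x ∈ t, x < omega1) : ∃ β, β < omega1 ∧ ∀ x ∈ t, x < β := by
  rcases t.eq_empty_or_nonempty with rfl | hne
  · exact ⟨0, omega1_isLimit.pos, by simp⟩
  obtain ⟨f, rfl⟩ := ht.exists_eq_range hne
  refine ⟨⨆ n, Order.succ (f n), ?_, ?_⟩
  · exact sup_lt_omega1 fun n => omega1_isLimit.succ_lt (h _ (Set.mem_range_self n))
  · rintro x ⟨n, rfl⟩
    exact lt_of_lt_of_le (Order.lt_succ _) (le_ciSup (Ordinal.bddAbove_range _) n)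

lemma countable_Iio {ξ : Ordinal.{0}} (hξ : ξ < omega1) : (Set.Iio ξ).Countable := by
  rw [Cardinal.countable_iff_lt_aleph_one, Ordinal.mk_Iio_ordinal]
  have h1 : ξ.card < Cardinal.aleph 1 := Cardinal.lt_ord.1 hξ
  have h2 : Cardinal.lift.{1} ξ.card < Cardinal.lift.{1} (Cardinal.aleph 1) :=
    Cardinal.lift_lt.2 h1
  rwa [Cardinal.lift_aleph, Ordinal.lift_one] at h2

/-- If `Ā = ⟨A α : α < ω₁⟩` is a sequence of pairwise disjoint subsets of
`ω₁`, `S ⊆ ω₁`, and `S` is certified at `γ ≥ ω₁` modulo `Ā`, then `ω₁ ≤ γ < ω₂` and for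
every canonical function `g` for `γ` and every `α ∈ ω₁ \ S`, the set
`{β < ω₁ : g β ∈ A α}` is nonstationary. -/
theorem certified_implies_coded_complement (A : Ordinal.{0} → Set Ordinal.{0})
    (hA : ∀ α < omega1, A α ⊆ Set.Iio omega1)
    (hdisj : ∀ α β : Ordinal.{0}, α < omega1 → β < omega1 → α ≠ β →
      Disjoint (A α) (A β))
    (S : Set Ordinal.{0}) (hS : S ⊆ Set.Iio omega1)
    (γ : Ordinal.{0}) (hγ : omega1 ≤ γ) (hcert : Certified A S γ) :
    omega1 ≤ γ ∧ γ < omega2 ∧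
    ∀ g : Ordinal.{0} → Ordinal.{0}, IsCanonical γ g →
      ∀ α : Ordinal.{0}, α < omega1 → α ∉ S →
        ¬ IsStationary1 {β | β < omega1 ∧ g β ∈ A α} := by
  obtain ⟨a, ha1, ha2, ha3, ha4⟩ := hcert
  -- monotonicity of the certifying chain
  have hmono : ∀ α β : Ordinal.{0}, α ≤ β → β < omega1 → a α ⊆ a β := by
    intro α β hle hβ
    rcases lt_or_eq_of_le hle with h | rfl
    · exact (ha2 α β h hβ).subset
    · exact subset_rfl
  -- any countable subset of Iio γ is contained in some a β
  have hcontain : ∀ t : Set Ordinal.{0}, t.Countable → t ⊆ Set.Iio γ →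
      ∃ β, β < omega1 ∧ t ⊆ a β := by
    intro t htc hsub
    have hx : ∀ x ∈ t, ∃ i, i < omega1 ∧ x ∈ a i := by
      intro x hx
      have : x ∈ ⋃ (α) (_ : α < omega1), a α := ha4 ▸ hsub hx
      simpa using this
    choose! i hi1 hi2 using hx
    obtain ⟨β, hβ, hb⟩ := exists_bound_lt_omega1 (htc.image i)
      (by rintro _ ⟨x, hx, rfl⟩; exact hi1 x hx)
    refine ⟨β, hβ, fun x hx => ?_⟩
    exact hmono (i x) β (hb _ (Set.mem_image_of_mem i hx)).le hβ (hi2 x hx)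
  refine ⟨hγ, ?_, ?_⟩
  · -- γ < ω₂
    rw [omega2, Cardinal.lt_ord]
    refine lt_of_le_of_lt ?_ (Cardinal.aleph_lt_aleph.2 one_lt_two)
    rw [← Cardinal.lift_le.{1}]
    haveI : Nonempty (Set.Iio omega1) := ⟨⟨0, omega1_isLimit.pos⟩⟩
    have heq : Set.Iio γ = ⋃ α ∈ Set.Iio omega1, a α := ha4
    have h1 : Cardinal.mk (Set.Iio γ) ≤
        Cardinal.mk (Set.Iio omega1) * ⨆ α : Set.Iio omega1, Cardinal.mk (a (α : Ordinal.{0})) := by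
      rw [heq]; exact Cardinal.mk_biUnion_le a (Set.Iio omega1)
    rw [Ordinal.mk_Iio_ordinal, Ordinal.mk_Iio_ordinal, omega1, Cardinal.card_ord] at h1
    have h2 : (⨆ α : Set.Iio omega1, Cardinal.mk (a (α : Ordinal.{0}))) ≤ Cardinal.aleph0 := by
      apply ciSup_le'
      intro α
      haveI := ((ha1 α α.2).2.1).to_subtype
      exact Cardinal.mk_le_aleph0
    have h3 : Cardinal.lift.{1} γ.card ≤
        Cardinal.lift.{1} (Cardinal.aleph 1) * Cardinal.aleph0 :=
      le_trans h1 (mul_le_mul' le_rfl h2)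
    have h4 : Cardinal.lift.{1} (Cardinal.aleph 1) * Cardinal.aleph0 =
        Cardinal.lift.{1} (Cardinal.aleph 1) := by
      apply Cardinal.mul_aleph0_eq
      rw [Cardinal.aleph0_le_lift]
      exact Cardinal.aleph0_le_aleph 1
    rwa [h4] at h3
  · -- main part
    rintro g ⟨π, hπ, hg⟩ α hα hαS hstat
    -- every a β is contained in some π '' Iio δ
    have hpre : ∀ β, β < omega1 → ∃ δ, δ < omega1 ∧ a β ⊆ π '' Set.Iio δ := by
      intro β hβ
      have hsub : a β ⊆ Set.Iio γ := (ha1 β hβ).1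
      have hx : ∀ x ∈ a β, ∃ y, y < omega1 ∧ π y = x := by
        intro x hx
        obtain ⟨y, hy, hyx⟩ := hπ.surjOn (hsub hx)
        exact ⟨y, hy, hyx⟩
      choose! p hp1 hp2 using hx
      obtain ⟨δ, hδ, hb⟩ := exists_bound_lt_omega1 (((ha1 β hβ).2.1).image p)
        (by rintro _ ⟨x, hx, rfl⟩; exact hp1 x hx)
      refine ⟨δ, hδ, fun x hx => ?_⟩
      exact ⟨p x, hb _ (Set.mem_image_of_mem p hx), hp2 x hx⟩
    -- every π '' Iio ξ is contained in some a β
    have himg : ∀ ξ, ξ < omega1 → ∃ β, β < omega1 ∧ π '' Set.Iio ξ ⊆ a β := by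
      intro ξ hξ
      apply hcontain _ ((countable_Iio hξ).image π)
      rintro _ ⟨y, hy, rfl⟩
      exact hπ.mapsTo (lt_trans hy hξ)
    -- the club
    set C : Set Ordinal.{0} := {β | β < omega1 ∧ π '' Set.Iio β = a β} with hC
    have hCsub : C ⊆ Set.Iio omega1 := fun β hβ => hβ.1
    -- unboundedness
    have hstep : ∀ ξ, ξ < omega1 → ∃ β, ξ < β ∧ β < omega1 ∧
        a ξ ⊆ π '' Set.Iio β ∧ π '' Set.Iio ξ ⊆ a β := by
      intro ξ hξ
      obtain ⟨δ, hδ, hδ2⟩ := hpre ξ hξ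
      obtain ⟨β', hβ', hβ'2⟩ := himg ξ hξ
      refine ⟨max (max δ β') (Order.succ ξ), lt_of_lt_of_le (Order.lt_succ ξ) (le_max_right _ _),
        ?_, ?_, ?_⟩
      · exact max_lt (max_lt hδ hβ') (omega1_isLimit.succ_lt hξ)
      · exact hδ2.trans (Set.image_mono (Set.Iio_subset_Iio
          (le_trans (le_max_left δ β') (le_max_left _ _))))
      · exact hβ'2.trans (hmono β' _ (le_trans (le_max_right δ β') (le_max_left _ _))
          (max_lt (max_lt hδ hβ') (omega1_isLimit.succ_lt hξ)))
    have hunb : ∀ α₀ < omega1, ∃ β ∈ C, α₀ < β := by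
      intro α₀ hα₀
      -- build an ω-chain
      have : ∃ seq : ℕ → Ordinal.{0}, seq 0 = α₀ ∧ (∀ n, seq n < omega1) ∧
          (∀ n, seq n < seq (n+1)) ∧
          (∀ n, a (seq n) ⊆ π '' Set.Iio (seq (n+1))) ∧
          (∀ n, π '' Set.Iio (seq n) ⊆ a (seq (n+1))) := by
        choose! F hF1 hF2 hF3 hF4 using hstep
        refine ⟨fun n => F^[n] α₀, rfl, ?_, ?_, ?_, ?_⟩
        · intro n
          induction n with
          | zero => exact hα₀
          | succ n ih =>
            simp only [Function.iterate_succ_apply']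
            exact hF2 _ ih
        all_goals {
          have hlt : ∀ n, F^[n] α₀ < omega1 := by
            intro n
            induction n with
            | zero => exact hα₀
            | succ n ih =>
              simp only [Function.iterate_succ_apply']
              exact hF2 _ ih
          intro n
          simp only [Function.iterate_succ_apply']
          first
            | exact hF1 _ (hlt n)
            | exact hF3 _ (hlt n)
            | exact hF4 _ (hlt n)
        }
      obtain ⟨seq, hseq0, hseqlt, hseqmono, hseqa, hseqb⟩ := this
      set β := ⨆ n, seq n with hβdef
      have hβlt : β < omega1 := sup_lt_omega1 hseqlt
      have hle : ∀ n, seq n ≤ β := fun n => le_ciSup (Ordinal.bddAbove_range _) n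
      have hltβ : ∀ n, seq n < β := fun n => lt_of_lt_of_le (hseqmono n) (hle (n+1))
      have hltiff : ∀ x, x < β → ∃ n, x < seq n := by
        intro x hx
        rw [hβdef, Ordinal.lt_iSup_iff] at hx
        exact hx
      have hβlim : Order.IsSuccLimit β := by
        rw [Ordinal.isSuccLimit_iff, Order.isSuccPrelimit_iff_succ_lt]
        constructor
        · intro h0
          exact absurd (h0 ▸ hltβ 0) (by simp)
        · intro x hx
          obtain ⟨n, hn⟩ := hltiff x hx
          exact lt_of_le_of_lt (Order.succ_le_of_lt hn) (hltβ n)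
      refine ⟨β, ⟨hβlt, ?_⟩, lt_of_le_of_lt (le_of_eq hseq0.symm) (hltβ 0)⟩
      have hβeq := ha3 β hβlt hβlim
      apply Set.Subset.antisymm
      · rintro _ ⟨y, hy, rfl⟩
        obtain ⟨n, hn⟩ := hltiff y hy
        have : π y ∈ a (seq (n+1)) := hseqb n ⟨y, hn, rfl⟩
        rw [hβeq]
        exact Set.mem_biUnion (hltβ (n+1)) this
      · rw [hβeq]
        intro x hx
        simp only [Set.mem_iUnion] at hx
        obtain ⟨ι, hι, hxι⟩ := hx
        obtain ⟨n, hn⟩ := hltiff ι hι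
        have : x ∈ π '' Set.Iio (seq (n+1)) := hseqa n (hmono ι (seq n) hn.le (hseqlt n) hxι)
        exact Set.image_mono (Set.Iio_subset_Iio (hle (n+1))) this
    -- closedness
    have hclosed : ∀ s : Set Ordinal.{0}, s ⊆ C → s.Nonempty → sSup s < omega1 → sSup s ∈ C := by
      intro s hsub hne hlt
      by_cases hmem : sSup s ∈ s
      · exact hsub hmem
      have hbdd : BddAbove s := ⟨omega1, fun b hb => ((hsub hb).1).le⟩
      have hblt : ∀ b ∈ s, b < sSup s := by
        intro b hb
        exact lt_of_le_of_ne (le_csSup hbdd hb) (fun h => hmem (h ▸ hb))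
      have hltiff : ∀ x, x < sSup s → ∃ b ∈ s, x < b := fun x hx =>
        (lt_csSup_iff hbdd hne).1 hx
      have hlim : Order.IsSuccLimit (sSup s) := by
        rw [Ordinal.isSuccLimit_iff, Order.isSuccPrelimit_iff_succ_lt]
        constructor
        · intro h0
          obtain ⟨b, hb⟩ := hne
          have := hblt b hb
          rw [h0] at this
          exact absurd this (by simp)
        · intro x hx
          obtain ⟨b, hb, hxb⟩ := hltiff x hx
          exact lt_of_le_of_lt (Order.succ_le_of_lt hxb) (hblt b hb)
      refine ⟨hlt, ?_⟩
      have hβeq := ha3 _ hlt hlim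
      apply Set.Subset.antisymm
      · rintro _ ⟨y, hy, rfl⟩
        obtain ⟨b, hb, hyb⟩ := hltiff y hy
        have : π y ∈ a b := ((hsub hb).2 ▸ ⟨y, hyb, rfl⟩)
        rw [hβeq]
        exact Set.mem_biUnion (hblt b hb) this
      · rw [hβeq]
        intro x hx
        simp only [Set.mem_iUnion] at hx
        obtain ⟨ι, hι, hxι⟩ := hx
        obtain ⟨b, hb, hιb⟩ := hltiff ι hι
        have hx2 : x ∈ π '' Set.Iio b :=
          (hsub hb).2 ▸ hmono ι b hιb.le ((hsub hb).1) hxι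
        exact Set.image_mono (Set.Iio_subset_Iio (le_csSup hbdd hb)) hx2
    -- conclude
    obtain ⟨β, ⟨hβlt, hβA⟩, ⟨hβω, hβeq⟩⟩ := hstat C ⟨hCsub, hunb, hclosed⟩
    have hotp : g β ∈ ⋃ ξ ∈ S, A ξ := by
      rw [hg β hβω, hβeq]
      exact (ha1 β hβω).2.2
    simp only [Set.mem_iUnion] at hotp
    obtain ⟨ξ, hξS, hξA⟩ := hotp
    have hne : α ≠ ξ := fun h => hαS (h ▸ hξS)
    exact Set.disjoint_left.1 (hdisj α ξ hα (hS hξS) hne) hβA hξA
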